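/- Let F be the free semigroup on two generators a, b, and let c₀ be the smallest congruence on F containing, for all elements x₁, x₂, x₃, x₄, x, y, z ∈ F, the pairs (x₁x₂x₃x₄, x₂x₃x₁x₄), (x²y, xyx), (xyx, yx²), (x³yz, xy³z), and (x⁶, x⁷). Then the images in the quotient F/c₀ of the six words a², ba, a²b², ab², a²b, a⁴b are pairwise distinct. -/

import Mathlib

/-- All substitution instances of the identities
`x₁x₂x₃x₄ = x₂x₃x₁x₄`, `x²y = xyx`, `xyx = yx²`, `x³yz = xy³z`, `x⁶ = x⁷`. -/
def m5Rel : FreeSemigroup (Fin 2) → FreeSemigroup (Fin 2) → Prop := fun u v =>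
  (∃ x₁ x₂ x₃ x₄ : FreeSemigroup (Fin 2),
      u = x₁ * x₂ * x₃ * x₄ ∧ v = x₂ * x₃ * x₁ * x₄) ∨
  (∃ x y : FreeSemigroup (Fin 2), u = x * x * y ∧ v = x * y * x) ∨
  (∃ x y : FreeSemigroup (Fin 2), u = x * y * x ∧ v = y * (x * x)) ∨
  (∃ x y z : FreeSemigroup (Fin 2), u = x * x * x * y * z ∧ v = x * (y * y * y) * z) ∨
  (∃ x : FreeSemigroup (Fin 2),
      u = x * x * x * x * x * x ∧ v = x * x * x * x * x * x * x)


inductive M5S : Type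
  | e0 | e1 | e2 | e3 | e4 | e5 | e6 | e7 | e8 | e9 | e10 | e11 | e12 | e13 | e14 | e15 | e16 | e17 | e18 | e19 | e20 | e21
deriving DecidableEq

open M5S in
instance : Fintype M5S := ⟨⟨↑[e0, e1, e2, e3, e4, e5, e6, e7, e8, e9, e10, e11, e12, e13, e14, e15, e16, e17, e18, e19, e20, e21], by decide⟩, fun x => by cases x <;> decide⟩

open M5S in
def m5mul : M5S → M5S → M5S
  | e0, e0 => e1
  | e0, e1 => e2
  | e0, e2 => e3
  | e0, e3 => e4
  | e0, e4 => e5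
  | e0, e5 => e5
  | e0, e6 => e6
  | e0, e7 => e6
  | e0, e8 => e7
  | e0, e9 => e6
  | e0, e10 => e8
  | e0, e11 => e9
  | e0, e12 => e10
  | e0, e13 => e11
  | e0, e14 => e7
  | e0, e15 => e12
  | e0, e16 => e10
  | e0, e17 => e13
  | e0, e18 => e14
  | e0, e19 => e9
  | e0, e20 => e6
  | e0, e21 => e6
  | e1, e0 => e2
  | e1, e1 => e3
  | e1, e2 => e4
  | e1, e3 => e5
  | e1, e4 => e5
  | e1, e5 => e5
  | e1, e6 => e6
  | e1, e7 => e6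
  | e1, e8 => e6
  | e1, e9 => e6
  | e1, e10 => e7
  | e1, e11 => e6
  | e1, e12 => e8
  | e1, e13 => e9
  | e1, e14 => e6
  | e1, e15 => e10
  | e1, e16 => e8
  | e1, e17 => e11
  | e1, e18 => e7
  | e1, e19 => e6
  | e1, e20 => e6
  | e1, e21 => e6
  | e2, e0 => e3
  | e2, e1 => e4
  | e2, e2 => e5
  | e2, e3 => e5
  | e2, e4 => e5
  | e2, e5 => e5
  | e2, e6 => e6
  | e2, e7 => e6
  | e2, e8 => e6
  | e2, e9 => e6
  | e2, e10 => e6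
  | e2, e11 => e6
  | e2, e12 => e7
  | e2, e13 => e6
  | e2, e14 => e6
  | e2, e15 => e8
  | e2, e16 => e7
  | e2, e17 => e9
  | e2, e18 => e6
  | e2, e19 => e6
  | e2, e20 => e6
  | e2, e21 => e6
  | e3, e0 => e4
  | e3, e1 => e5
  | e3, e2 => e5
  | e3, e3 => e5
  | e3, e4 => e5
  | e3, e5 => e5
  | e3, e6 => e6
  | e3, e7 => e6
  | e3, e8 => e6
  | e3, e9 => e6
  | e3, e10 => e6
  | e3, e11 => e6
  | e3, e12 => e6
  | e3, e13 => e6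
  | e3, e14 => e6
  | e3, e15 => e7
  | e3, e16 => e6
  | e3, e17 => e6
  | e3, e18 => e6
  | e3, e19 => e6
  | e3, e20 => e6
  | e3, e21 => e6
  | e4, e0 => e5
  | e4, e1 => e5
  | e4, e2 => e5
  | e4, e3 => e5
  | e4, e4 => e5
  | e4, e5 => e5
  | e4, e6 => e6
  | e4, e7 => e6
  | e4, e8 => e6
  | e4, e9 => e6
  | e4, e10 => e6
  | e4, e11 => e6
  | e4, e12 => e6
  | e4, e13 => e6
  | e4, e14 => e6
  | e4, e15 => e6
  | e4, e16 => e6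
  | e4, e17 => e6
  | e4, e18 => e6
  | e4, e19 => e6
  | e4, e20 => e6
  | e4, e21 => e6
  | e5, e0 => e5
  | e5, e1 => e5
  | e5, e2 => e5
  | e5, e3 => e5
  | e5, e4 => e5
  | e5, e5 => e5
  | e5, e6 => e6
  | e5, e7 => e6
  | e5, e8 => e6
  | e5, e9 => e6
  | e5, e10 => e6
  | e5, e11 => e6
  | e5, e12 => e6
  | e5, e13 => e6
  | e5, e14 => e6
  | e5, e15 => e6
  | e5, e16 => e6
  | e5, e17 => e6
  | e5, e18 => e6
  | e5, e19 => e6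
  | e5, e20 => e6
  | e5, e21 => e6
  | e6, e0 => e6
  | e6, e1 => e6
  | e6, e2 => e6
  | e6, e3 => e6
  | e6, e4 => e6
  | e6, e5 => e6
  | e6, e6 => e6
  | e6, e7 => e6
  | e6, e8 => e6
  | e6, e9 => e6
  | e6, e10 => e6
  | e6, e11 => e6
  | e6, e12 => e6
  | e6, e13 => e6
  | e6, e14 => e6
  | e6, e15 => e6
  | e6, e16 => e6
  | e6, e17 => e6
  | e6, e18 => e6
  | e6, e19 => e6
  | e6, e20 => e6
  | e6, e21 => e6
  | e7, e0 => e6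
  | e7, e1 => e6
  | e7, e2 => e6
  | e7, e3 => e6
  | e7, e4 => e6
  | e7, e5 => e6
  | e7, e6 => e6
  | e7, e7 => e6
  | e7, e8 => e6
  | e7, e9 => e6
  | e7, e10 => e6
  | e7, e11 => e6
  | e7, e12 => e6
  | e7, e13 => e6
  | e7, e14 => e6
  | e7, e15 => e6
  | e7, e16 => e6
  | e7, e17 => e6
  | e7, e18 => e6
  | e7, e19 => e6
  | e7, e20 => e6
  | e7, e21 => e6
  | e8, e0 => e7
  | e8, e1 => e6
  | e8, e2 => e6
  | e8, e3 => e6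
  | e8, e4 => e6
  | e8, e5 => e6
  | e8, e6 => e6
  | e8, e7 => e6
  | e8, e8 => e6
  | e8, e9 => e6
  | e8, e10 => e6
  | e8, e11 => e6
  | e8, e12 => e6
  | e8, e13 => e6
  | e8, e14 => e6
  | e8, e15 => e9
  | e8, e16 => e6
  | e8, e17 => e6
  | e8, e18 => e6
  | e8, e19 => e6
  | e8, e20 => e6
  | e8, e21 => e6
  | e9, e0 => e6
  | e9, e1 => e6
  | e9, e2 => e6
  | e9, e3 => e6
  | e9, e4 => e6
  | e9, e5 => e6
  | e9, e6 => e6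
  | e9, e7 => e6
  | e9, e8 => e6
  | e9, e9 => e6
  | e9, e10 => e6
  | e9, e11 => e6
  | e9, e12 => e6
  | e9, e13 => e6
  | e9, e14 => e6
  | e9, e15 => e6
  | e9, e16 => e6
  | e9, e17 => e6
  | e9, e18 => e6
  | e9, e19 => e6
  | e9, e20 => e6
  | e9, e21 => e6
  | e10, e0 => e8
  | e10, e1 => e7
  | e10, e2 => e6
  | e10, e3 => e6
  | e10, e4 => e6
  | e10, e5 => e6
  | e10, e6 => e6
  | e10, e7 => e6
  | e10, e8 => e6
  | e10, e9 => e6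
  | e10, e10 => e6
  | e10, e11 => e6
  | e10, e12 => e9
  | e10, e13 => e6
  | e10, e14 => e6
  | e10, e15 => e11
  | e10, e16 => e9
  | e10, e17 => e7
  | e10, e18 => e6
  | e10, e19 => e6
  | e10, e20 => e6
  | e10, e21 => e6
  | e11, e0 => e9
  | e11, e1 => e6
  | e11, e2 => e6
  | e11, e3 => e6
  | e11, e4 => e6
  | e11, e5 => e6
  | e11, e6 => e6
  | e11, e7 => e6
  | e11, e8 => e6
  | e11, e9 => e6
  | e11, e10 => e6
  | e11, e11 => e6
  | e11, e12 => e6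
  | e11, e13 => e6
  | e11, e14 => e6
  | e11, e15 => e7
  | e11, e16 => e6
  | e11, e17 => e6
  | e11, e18 => e6
  | e11, e19 => e6
  | e11, e20 => e6
  | e11, e21 => e6
  | e12, e0 => e10
  | e12, e1 => e8
  | e12, e2 => e7
  | e12, e3 => e6
  | e12, e4 => e6
  | e12, e5 => e6
  | e12, e6 => e6
  | e12, e7 => e6
  | e12, e8 => e6
  | e12, e9 => e6
  | e12, e10 => e9
  | e12, e11 => e6
  | e12, e12 => e11
  | e12, e13 => e7
  | e12, e14 => e6
  | e12, e15 => e13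
  | e12, e16 => e11
  | e12, e17 => e14
  | e12, e18 => e9
  | e12, e19 => e6
  | e12, e20 => e6
  | e12, e21 => e6
  | e13, e0 => e11
  | e13, e1 => e9
  | e13, e2 => e6
  | e13, e3 => e6
  | e13, e4 => e6
  | e13, e5 => e6
  | e13, e6 => e6
  | e13, e7 => e6
  | e13, e8 => e6
  | e13, e9 => e6
  | e13, e10 => e6
  | e13, e11 => e6
  | e13, e12 => e7
  | e13, e13 => e6
  | e13, e14 => e6
  | e13, e15 => e14
  | e13, e16 => e7
  | e13, e17 => e9
  | e13, e18 => e6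
  | e13, e19 => e6
  | e13, e20 => e6
  | e13, e21 => e6
  | e14, e0 => e7
  | e14, e1 => e6
  | e14, e2 => e6
  | e14, e3 => e6
  | e14, e4 => e6
  | e14, e5 => e6
  | e14, e6 => e6
  | e14, e7 => e6
  | e14, e8 => e6
  | e14, e9 => e6
  | e14, e10 => e6
  | e14, e11 => e6
  | e14, e12 => e6
  | e14, e13 => e6
  | e14, e14 => e6
  | e14, e15 => e9
  | e14, e16 => e6
  | e14, e17 => e6
  | e14, e18 => e6
  | e14, e19 => e6
  | e14, e20 => e6
  | e14, e21 => e6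
  | e15, e0 => e16
  | e15, e1 => e10
  | e15, e2 => e8
  | e15, e3 => e7
  | e15, e4 => e6
  | e15, e5 => e6
  | e15, e6 => e6
  | e15, e7 => e6
  | e15, e8 => e9
  | e15, e9 => e6
  | e15, e10 => e11
  | e15, e11 => e7
  | e15, e12 => e13
  | e15, e13 => e14
  | e15, e14 => e9
  | e15, e15 => e17
  | e15, e16 => e13
  | e15, e17 => e18
  | e15, e18 => e19
  | e15, e19 => e20
  | e15, e20 => e21
  | e15, e21 => e21
  | e16, e0 => e10
  | e16, e1 => e8
  | e16, e2 => e7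
  | e16, e3 => e6
  | e16, e4 => e6
  | e16, e5 => e6
  | e16, e6 => e6
  | e16, e7 => e6
  | e16, e8 => e6
  | e16, e9 => e6
  | e16, e10 => e9
  | e16, e11 => e6
  | e16, e12 => e11
  | e16, e13 => e7
  | e16, e14 => e6
  | e16, e15 => e13
  | e16, e16 => e11
  | e16, e17 => e14
  | e16, e18 => e9
  | e16, e19 => e6
  | e16, e20 => e6
  | e16, e21 => e6
  | e17, e0 => e13
  | e17, e1 => e11
  | e17, e2 => e9
  | e17, e3 => e6
  | e17, e4 => e6
  | e17, e5 => e6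
  | e17, e6 => e6
  | e17, e7 => e6
  | e17, e8 => e6
  | e17, e9 => e6
  | e17, e10 => e7
  | e17, e11 => e6
  | e17, e12 => e14
  | e17, e13 => e9
  | e17, e14 => e6
  | e17, e15 => e18
  | e17, e16 => e14
  | e17, e17 => e19
  | e17, e18 => e20
  | e17, e19 => e21
  | e17, e20 => e21
  | e17, e21 => e21
  | e18, e0 => e14
  | e18, e1 => e7
  | e18, e2 => e6
  | e18, e3 => e6
  | e18, e4 => e6
  | e18, e5 => e6
  | e18, e6 => e6
  | e18, e7 => e6
  | e18, e8 => e6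
  | e18, e9 => e6
  | e18, e10 => e6
  | e18, e11 => e6
  | e18, e12 => e9
  | e18, e13 => e6
  | e18, e14 => e6
  | e18, e15 => e19
  | e18, e16 => e9
  | e18, e17 => e20
  | e18, e18 => e21
  | e18, e19 => e21
  | e18, e20 => e21
  | e18, e21 => e21
  | e19, e0 => e9
  | e19, e1 => e6
  | e19, e2 => e6
  | e19, e3 => e6
  | e19, e4 => e6
  | e19, e5 => e6
  | e19, e6 => e6
  | e19, e7 => e6
  | e19, e8 => e6
  | e19, e9 => e6
  | e19, e10 => e6
  | e19, e11 => e6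
  | e19, e12 => e6
  | e19, e13 => e6
  | e19, e14 => e6
  | e19, e15 => e20
  | e19, e16 => e6
  | e19, e17 => e21
  | e19, e18 => e21
  | e19, e19 => e21
  | e19, e20 => e21
  | e19, e21 => e21
  | e20, e0 => e6
  | e20, e1 => e6
  | e20, e2 => e6
  | e20, e3 => e6
  | e20, e4 => e6
  | e20, e5 => e6
  | e20, e6 => e6
  | e20, e7 => e6
  | e20, e8 => e6
  | e20, e9 => e6
  | e20, e10 => e6
  | e20, e11 => e6
  | e20, e12 => e6
  | e20, e13 => e6
  | e20, e14 => e6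
  | e20, e15 => e21
  | e20, e16 => e6
  | e20, e17 => e21
  | e20, e18 => e21
  | e20, e19 => e21
  | e20, e20 => e21
  | e20, e21 => e21
  | e21, e0 => e6
  | e21, e1 => e6
  | e21, e2 => e6
  | e21, e3 => e6
  | e21, e4 => e6
  | e21, e5 => e6
  | e21, e6 => e6
  | e21, e7 => e6
  | e21, e8 => e6
  | e21, e9 => e6
  | e21, e10 => e6
  | e21, e11 => e6
  | e21, e12 => e6
  | e21, e13 => e6
  | e21, e14 => e6
  | e21, e15 => e21
  | e21, e16 => e6
  | e21, e17 => e21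
  | e21, e18 => e21
  | e21, e19 => e21
  | e21, e20 => e21
  | e21, e21 => e21

instance : Mul M5S := ⟨m5mul⟩
set_option maxHeartbeats 4000000 in
instance : Semigroup M5S := ⟨by decide⟩

def m5g : Fin 2 → M5S := ![M5S.e0, M5S.e15]

def m5φ : FreeSemigroup (Fin 2) →ₙ* M5S := FreeSemigroup.lift m5g

set_option maxHeartbeats 4000000 in
lemma m5L1 : ∀ u v w : M5S, u * v * w = v * u * w := by decide
set_option maxHeartbeats 1000000 in
lemma m5L2 : ∀ x y : M5S, x * x * y = x * y * x := by decide
set_option maxHeartbeats 1000000 in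
lemma m5L3 : ∀ x y : M5S, x * y * x = y * (x * x) := by decide
set_option maxHeartbeats 8000000 in
lemma m5L4 : ∀ x y z : M5S, x * x * x * y * z = x * (y * y * y) * z := by decide
set_option maxHeartbeats 1000000 in
lemma m5L5 : ∀ x : M5S, x*x*x*x*x*x = x*x*x*x*x*x*x := by decide

lemma m5E1 : ∀ a b c d : M5S, a * b * c * d = b * c * a * d := by
  intro a b c d
  rw [mul_assoc a b c]
  exact m5L1 a (b * c) d

lemma m5key : ∀ u v : FreeSemigroup (Fin 2), conGen m5Rel u v → m5φ u = m5φ v := by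
  have h : conGen m5Rel ≤ Con.ker m5φ := by
    apply Con.conGen_le.mpr
    rintro u v (⟨x1, x2, x3, x4, rfl, rfl⟩ | ⟨x, y, rfl, rfl⟩ | ⟨x, y, rfl, rfl⟩ |
      ⟨x, y, z, rfl, rfl⟩ | ⟨x, rfl, rfl⟩) <;>
      show m5φ _ = m5φ _ <;> simp only [map_mul]
    · exact m5E1 _ _ _ _
    · exact m5L2 _ _
    · exact m5L3 _ _
    · exact m5L4 _ _ _
    · exact m5L5 _
  exact fun u v huv => h huv

/-- In the free semigroup on two generators `a b` modulo the smallest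
congruence generated by all instances of `x₁x₂x₃x₄ = x₂x₃x₁x₄`,
`x²y = xyx = yx²`, `x³yz = xy³z`, `x⁶ = x⁷`, the images of
`a²`, `ba`, `a²b²`, `ab²`, `a²b`, `a⁴b` are pairwise distinct. -/
theorem stmt_14 :
    let a := FreeSemigroup.of (0 : Fin 2)
    let b := FreeSemigroup.of (1 : Fin 2)
    ([a * a, b * a, a * a * b * b, a * b * b, a * a * b, a * a * a * a * b].map
        (fun w => (w : (conGen m5Rel).Quotient))).Pairwise (· ≠ ·) := by
  intro a b
  show (([a * a, b * a, a * a * b * b, a * b * b, a * a * b,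
      a * a * a * a * b]).map
      (fun w => ((w : FreeSemigroup (Fin 2)) : (conGen m5Rel).Quotient))).Pairwise (· ≠ ·)
  rw [List.pairwise_map]
  have hv0 : m5φ a = M5S.e0 := rfl
  have hv1 : m5φ b = M5S.e15 := rfl
  have hp : [a * a, b * a, a * a * b * b, a * b * b, a * a * b,
      a * a * a * a * b].Pairwise (fun u v => m5φ u ≠ m5φ v) := by
    simp only [List.pairwise_cons, List.mem_cons, List.not_mem_nil, ne_eq, map_mul, hv0, hv1]
    refine ⟨?_, ?_, ?_, ?_, ?_, ?_⟩ <;> simp_all <;> decide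
  refine hp.imp ?_
  intro u v h hc
  exact h (m5key u v ((Con.eq _).mp hc))
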